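/- Let K be a number field. If ξ ∈ W_{O_K}(O_K) is a Witt vector whose set of coefficient values C_ξ := { ξ_a ∈ O_K : a ∈ I_K } is finite, then the orbit I_K·ξ := { ψ_a ξ ∈ W_{O_K}(O_K) : a ∈ I_K } of ξ under the shift operators is also a finite set. -/

import Mathlib

open NumberField

set_option maxHeartbeats 1000000
set_option synthInstance.maxHeartbeats 200000

noncomputable section

/-- The multiplicative monoid `I_K` of nonzero ideals of the ring of integers of `K`. -/
def IdealMonoid (K : Type) [Field K] [NumberField K] : Submonoid (Ideal (𝓞 K)) where
  carrier := {I | I ≠ ⊥}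
  mul_mem' := by
    intro a b ha hb h
    rcases Ideal.mul_eq_bot.mp h with h' | h'
    · exact ha h'
    · exact hb h'
  one_mem' := by
    simp only [Set.mem_setOf_eq, Ideal.one_eq_top]
    exact top_ne_bot

/-- `I_K`, the monoid of nonzero ideals, as a type. -/
abbrev IK (K : Type) [Field K] [NumberField K] := ↥(IdealMonoid K)

/-- `P_K`, the set of nonzero prime ideals of `𝓞 K`, as a type. -/
def PrimeIdeal (K : Type) [Field K] [NumberField K] :=
  {p : Ideal (𝓞 K) // p.IsPrime ∧ p ≠ ⊥}

/-- A nonzero prime ideal, regarded as an element of `I_K`. -/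
def PrimeIdeal.toIK {K : Type} [Field K] [NumberField K] (p : PrimeIdeal K) : IK K :=
  ⟨p.1, p.2.2⟩

/-- `#k_p`: the cardinality of the residue ring `R ⧸ p`. -/
def residueCard {R : Type} [CommRing R] (p : Ideal R) : ℕ :=
  Nat.card (R ⧸ p)

/-- The shift operator `ψ_a` on `A^{I_K}`: `(ψ_a ξ)_b = ξ_{a·b}`. -/
def shift {K : Type} [Field K] [NumberField K] {A : Type} (a : IK K)
    (ξ : IK K → A) : IK K → A :=
  fun b => ξ (a * b)

/-- For an ideal `p` of `𝓞 K` and a subset `S ⊆ A^{I_K}`, the set `p·S` of all finite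
sums of products of elements of `p` with elements of (the module generated by) `S`. -/
def idealMulSet {K : Type} [Field K] [NumberField K] {A : Type} [CommRing A]
    [Algebra (𝓞 K) A] (p : Ideal (𝓞 K)) (S : Set (IK K → A)) : Set (IK K → A) :=
  ↑(p • Submodule.span (𝓞 K) S)

/-- The descending chain `U_n(A)` of subsets of `A^{I_K}`. -/
def UnSet (K : Type) [Field K] [NumberField K] (A : Type) [CommRing A]
    [Algebra (𝓞 K) A] : ℕ → Set (IK K → A)
  | 0 => Set.univ
  | n + 1 => {ξ | ξ ∈ UnSet K A n ∧ ∀ p : PrimeIdeal K,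
      shift p.toIK ξ - ξ ^ residueCard p.1 ∈ idealMulSet p.1 (UnSet K A n)}

/-- The ring of Witt vectors `W_{O_K}(A) = ⋂ₙ U_n(A)`, as a subset of `A^{I_K}`. -/
def WittSet (K : Type) [Field K] [NumberField K] (A : Type) [CommRing A]
    [Algebra (𝓞 K) A] : Set (IK K → A) :=
  ⋂ n, UnSet K A n

/-- A deterministic finite automaton with output, over input alphabet `Δ` and
output alphabet `O`. -/
structure DFAO (Δ O : Type) : Type 1 where
  State : Type
  [finState : Finite State]
  trans : State → Δ → State
  start : State
  out : State → O

/-- The output of a DFAO on an input word, processing letters from left to right. -/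
def DFAO.output {Δ O : Type} (M : DFAO Δ O) (l : List Δ) : O :=
  M.out (l.foldl M.trans M.start)

/-- `ξ ∈ A^{I_K}` is automatic if some DFAO with input alphabet `P_K` and output
alphabet `A` produces `ξ_a` from every word of primes whose product is `a`. -/
def IsAutomatic {K : Type} [Field K] [NumberField K] {A : Type}
    (ξ : IK K → A) : Prop :=
  ∃ M : DFAO (PrimeIdeal K) A, ∀ (l : List (PrimeIdeal K)) (a : IK K),
    (a : Ideal (𝓞 K)) = (l.map Subtype.val).prod → ξ a = M.output l

/-- `v_p(a)`: the largest `e` such that `p^e` divides `a`. -/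
def vIdeal {R : Type} [CommRing R] (p a : Ideal R) : ℕ :=
  sSup {e : ℕ | p ^ e ∣ a}

section AuxLemmas

variable {K : Type} [Field K] [NumberField K]

lemma mem_IdealMonoid_iff {I : Ideal (𝓞 K)} : I ∈ IdealMonoid K ↔ I ≠ ⊥ := Iff.rfl

lemma mem_UnSet_succ_iff {n : ℕ} {ξ : IK K → 𝓞 K} :
    ξ ∈ UnSet K (𝓞 K) (n + 1) ↔ ξ ∈ UnSet K (𝓞 K) n ∧ ∀ p : PrimeIdeal K,
      shift p.toIK ξ - ξ ^ residueCard p.1 ∈ idealMulSet p.1 (UnSet K (𝓞 K) n) :=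
  Iff.rfl

lemma aux_card_mem (p : PrimeIdeal K) : ((residueCard p.1 : ℕ) : 𝓞 K) ∈ p.1 := by
  haveI : Fintype ((𝓞 K) ⧸ p.1) := @Fintype.ofFinite _ (Ideal.finiteQuotientOfFreeOfNeBot p.1 p.2.2)
  rw [← Ideal.Quotient.eq_zero_iff_mem, map_natCast]
  simpa [residueCard] using Nat.cast_card_eq_zero ((𝓞 K) ⧸ p.1)

lemma aux_fermat (p : PrimeIdeal K) (x : 𝓞 K) : x ^ residueCard p.1 - x ∈ p.1 := by
  haveI : Fintype ((𝓞 K) ⧸ p.1) := @Fintype.ofFinite _ (Ideal.finiteQuotientOfFreeOfNeBot p.1 p.2.2)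
  haveI : p.1.IsMaximal := p.2.1.isMaximal p.2.2
  letI : Field ((𝓞 K) ⧸ p.1) := Ideal.Quotient.field p.1
  rw [← Ideal.Quotient.eq_zero_iff_mem, map_sub, map_pow, sub_eq_zero]
  have h : residueCard p.1 = Fintype.card ((𝓞 K) ⧸ p.1) := by
    simp [residueCard, Nat.card_eq_fintype_card]
  rw [h]
  exact FiniteField.pow_card _

lemma aux_pow_sub_pow (p : PrimeIdeal K) {x y : 𝓞 K} {m : ℕ} (hm : 1 ≤ m)
    (h : x - y ∈ p.1 ^ m) :
    x ^ residueCard p.1 - y ^ residueCard p.1 ∈ p.1 ^ (m + 1) := by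
  set q := residueCard p.1 with hqdef
  have hxy1 : x - y ∈ p.1 := Ideal.pow_le_self (by omega) h
  have hsum : (∑ i ∈ Finset.range q, x ^ i * y ^ (q - 1 - i)) ∈ p.1 := by
    haveI : Fintype ((𝓞 K) ⧸ p.1) := @Fintype.ofFinite _ (Ideal.finiteQuotientOfFreeOfNeBot p.1 p.2.2)
    rw [← Ideal.Quotient.eq_zero_iff_mem, map_sum]
    have hx : (Ideal.Quotient.mk p.1) x = Ideal.Quotient.mk p.1 y :=
      Ideal.Quotient.eq.mpr hxy1
    calc ∑ i ∈ Finset.range q, (Ideal.Quotient.mk p.1) (x ^ i * y ^ (q - 1 - i))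
        = ∑ _i ∈ Finset.range q, (Ideal.Quotient.mk p.1 y) ^ (q - 1) := by
          refine Finset.sum_congr rfl fun i hi => ?_
          rw [map_mul, map_pow, map_pow, hx, ← pow_add]
          congr 1
          have : i < q := Finset.mem_range.mp hi
          omega
      _ = (q : (𝓞 K) ⧸ p.1) * (Ideal.Quotient.mk p.1 y) ^ (q - 1) := by
          rw [Finset.sum_const, Finset.card_range, nsmul_eq_mul]
      _ = 0 := by
          have hz : ((q : ℕ) : (𝓞 K) ⧸ p.1) = 0 := by
            simpa [hqdef, residueCard] using Nat.cast_card_eq_zero ((𝓞 K) ⧸ p.1)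
          rw [hz, zero_mul]
  have hfac : (∑ i ∈ Finset.range q, x ^ i * y ^ (q - 1 - i)) * (x - y) = x ^ q - y ^ q :=
    geom_sum₂_mul x y q
  rw [← hfac, pow_succ']
  exact Ideal.mul_mem_mul hsum h

lemma aux_val {p : Ideal (𝓞 K)} {S : Set (IK K → 𝓞 K)} {η : IK K → 𝓞 K}
    (h : η ∈ idealMulSet p S) (b : IK K) : η b ∈ p := by
  have h' : η ∈ p • Submodule.span (𝓞 K) S := h
  refine Submodule.smul_induction_on h' (fun r hr f _ => ?_) (fun f g hf hg => ?_)
  · have hb : (r • f) b = r * f b := by simp [smul_eq_mul]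
    rw [hb]; exact Ideal.mul_mem_right _ p hr
  · have hb : (f + g) b = f b + g b := rfl
    rw [hb]; exact Ideal.add_mem p hf hg

lemma aux_G (n : ℕ) : ∀ ξ : IK K → 𝓞 K, ξ ∈ UnSet K (𝓞 K) n →
    ∀ (p : PrimeIdeal K) (k : ℕ) (c : IK K),
      ξ (p.toIK ^ (k + 1) * c) - ξ (p.toIK ^ k * c) ∈ p.1 ^ (min n (k + 1)) := by
  induction n with
  | zero =>
    intro ξ _ p k c
    have hmin : min 0 (k + 1) = 0 := Nat.zero_min _
    rw [hmin, pow_zero, Ideal.one_eq_top]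
    exact Submodule.mem_top
  | succ n ih =>
    intro ξ hξ p k c
    obtain ⟨hU, hδ⟩ := mem_UnSet_succ_iff.mp hξ
    have hδp := hδ p
    set q := residueCard p.1 with hqdef
    have hidx : ∀ (j : ℕ) (c : IK K), p.toIK * (p.toIK ^ j * c) = p.toIK ^ (j + 1) * c := by
      intro j c; rw [← mul_assoc, ← pow_succ']
    have hspan : ∀ ζ ∈ Submodule.span (𝓞 K) (UnSet K (𝓞 K) n), ∀ (k : ℕ) (c : IK K),
        ζ (p.toIK ^ (k + 1) * c) - ζ (p.toIK ^ k * c) ∈ p.1 ^ (min n (k + 1)) := by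
      intro ζ hζ
      induction hζ using Submodule.span_induction with
      | mem x hx => exact fun k c => ih x hx p k c
      | zero => intro k c; simp
      | add x y hx hy hpx hpy =>
        intro k c
        have hb : (x + y) (p.toIK ^ (k + 1) * c) - (x + y) (p.toIK ^ k * c)
            = (x (p.toIK ^ (k + 1) * c) - x (p.toIK ^ k * c))
              + (y (p.toIK ^ (k + 1) * c) - y (p.toIK ^ k * c)) := by
          show x _ + y _ - (x _ + y _) = _
          ring
        rw [hb]; exact Ideal.add_mem _ (hpx k c) (hpy k c)
      | smul r x hx hpx =>
        intro k c
        have hb : (r • x) (p.toIK ^ (k + 1) * c) - (r • x) (p.toIK ^ k * c)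
            = r * (x (p.toIK ^ (k + 1) * c) - x (p.toIK ^ k * c)) := by
          show r • x _ - r • x _ = _
          simp [smul_eq_mul]; ring
        rw [hb]; exact Ideal.mul_mem_left _ r (hpx k c)
    have hQD : ∀ (k : ℕ) (c : IK K),
        (shift p.toIK ξ - ξ ^ q) (p.toIK ^ (k + 1) * c)
          - (shift p.toIK ξ - ξ ^ q) (p.toIK ^ k * c) ∈ p.1 ^ (min n (k + 1) + 1) := by
      intro k c
      have h' : (shift p.toIK ξ - ξ ^ q) ∈ p.1 • Submodule.span (𝓞 K) (UnSet K (𝓞 K) n) := hδp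
      refine Submodule.smul_induction_on h' (fun r hr f hf => ?_) (fun f g hf hg => ?_)
      · have hb : (r • f) (p.toIK ^ (k + 1) * c) - (r • f) (p.toIK ^ k * c)
            = r * (f (p.toIK ^ (k + 1) * c) - f (p.toIK ^ k * c)) := by
          show r • f _ - r • f _ = _
          simp [smul_eq_mul]; ring
        rw [hb, pow_succ']
        exact Ideal.mul_mem_mul hr (hspan f hf k c)
      · have hb : (f + g) (p.toIK ^ (k + 1) * c) - (f + g) (p.toIK ^ k * c)
            = (f (p.toIK ^ (k + 1) * c) - f (p.toIK ^ k * c))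
              + (g (p.toIK ^ (k + 1) * c) - g (p.toIK ^ k * c)) := by
          show f _ + g _ - (f _ + g _) = _
          ring
        rw [hb]; exact Ideal.add_mem _ hf hg
    induction k with
    | zero =>
      have h1 : (shift p.toIK ξ - ξ ^ q) c ∈ p.1 := aux_val hδp c
      have h2 : ξ c ^ q - ξ c ∈ p.1 := aux_fermat p (ξ c)
      have hrew : ξ (p.toIK ^ (0 + 1) * c) - ξ (p.toIK ^ 0 * c)
          = (shift p.toIK ξ - ξ ^ q) c + (ξ c ^ q - ξ c) := by
        simp only [Pi.sub_apply, Pi.pow_apply, shift, zero_add, pow_one, pow_zero, one_mul]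
        ring
      have hmin : min (n + 1) (0 + 1) = 1 := by omega
      rw [hrew, hmin, pow_one]
      exact Ideal.add_mem _ h1 h2
    | succ k ihk =>
      have hA := hQD k c
      have hA2 : (shift p.toIK ξ - ξ ^ q) (p.toIK ^ (k + 1) * c)
          - (shift p.toIK ξ - ξ ^ q) (p.toIK ^ k * c) ∈ p.1 ^ (min (n + 1) (k + 1 + 1)) := by
        have hmm : min n (k + 1) + 1 = min (n + 1) (k + 1 + 1) := by omega
        rwa [hmm] at hA
      have hB' := aux_pow_sub_pow p (m := min (n + 1) (k + 1)) (by omega) ihk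
      have hB : ξ (p.toIK ^ (k + 1) * c) ^ q - ξ (p.toIK ^ k * c) ^ q
          ∈ p.1 ^ (min (n + 1) (k + 1 + 1)) :=
        Ideal.pow_le_pow_right (by omega) hB'
      have hiden : ξ (p.toIK ^ (k + 1 + 1) * c) - ξ (p.toIK ^ (k + 1) * c)
          = ((shift p.toIK ξ - ξ ^ q) (p.toIK ^ (k + 1) * c)
              - (shift p.toIK ξ - ξ ^ q) (p.toIK ^ k * c))
            + (ξ (p.toIK ^ (k + 1) * c) ^ q - ξ (p.toIK ^ k * c) ^ q) := by
        simp only [Pi.sub_apply, Pi.pow_apply, shift, hidx]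
        ring
      rw [hiden]
      exact Ideal.add_mem _ hA2 hB

lemma aux_Witt_cong {ξ : IK K → 𝓞 K} (hξ : ξ ∈ WittSet K (𝓞 K))
    (p : PrimeIdeal K) (k : ℕ) (c : IK K) :
    ξ (p.toIK ^ (k + 1) * c) - ξ (p.toIK ^ k * c) ∈ p.1 ^ (k + 1) := by
  have h := aux_G (K := K) (k + 1) ξ (Set.mem_iInter.mp hξ (k + 1)) p k c
  simpa [min_self] using h

lemma aux_Witt_cong1 {ξ : IK K → 𝓞 K} (hξ : ξ ∈ WittSet K (𝓞 K))
    (p : PrimeIdeal K) (c : IK K) :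
    ξ (p.toIK * c) - ξ c ∈ p.1 := by
  have h := aux_Witt_cong hξ p 0 c
  simpa using h

lemma aux_exists_pow_not_mem (p : PrimeIdeal K) {d : 𝓞 K} (hd : d ≠ 0) :
    ∃ m : ℕ, d ∉ p.1 ^ m := by
  by_contra h
  push_neg at h
  have hmem : d ∈ ⨅ i : ℕ, p.1 ^ i := Submodule.mem_iInf _ |>.mpr h
  rw [Ideal.iInf_pow_eq_bot_of_isDomain p.1 p.2.1.ne_top] at hmem
  exact hd (by simpa using hmem)

end AuxLemmas


/-- if `ξ ∈ W_{O_K}(O_K)` has a finite set of coefficient values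
`C_ξ = {ξ_a : a ∈ I_K}`, then its orbit `{ψ_a ξ : a ∈ I_K}` under the shift
operators is also finite. -/
theorem orbit_finite_of_coeffs_finite (K : Type) [Field K] [NumberField K]
    (ξ : IK K → 𝓞 K) (hξ : ξ ∈ WittSet K (𝓞 K))
    (hC : (Set.range ξ).Finite) :
    (Set.range fun a : IK K => shift a ξ).Finite := by
  classical
  -- choose a bound `M p` for each prime
  have hMex : ∀ p : PrimeIdeal K, ∃ M : ℕ,
      ∀ x ∈ Set.range ξ, ∀ y ∈ Set.range ξ, x - y ∈ p.1 ^ (M + 1) → x = y := by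
    intro p
    have hpair : ∀ z : 𝓞 K × 𝓞 K, ∃ m : ℕ, z.1 ≠ z.2 → z.1 - z.2 ∉ p.1 ^ m := by
      intro z
      by_cases hz : z.1 = z.2
      · exact ⟨0, fun h => absurd hz h⟩
      · obtain ⟨m, hm⟩ := aux_exists_pow_not_mem p (sub_ne_zero.mpr hz)
        exact ⟨m, fun _ => hm⟩
    choose f hf using hpair
    have hfin : ((Set.range ξ) ×ˢ (Set.range ξ)).Finite := hC.prod hC
    refine ⟨hfin.toFinset.sup f, fun x hx y hy hmem => ?_⟩
    by_contra hne
    have hzmem : ((x, y) : 𝓞 K × 𝓞 K) ∈ hfin.toFinset := by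
      rw [Set.Finite.mem_toFinset]; exact ⟨hx, hy⟩
    exact hf (x, y) hne
      (Ideal.pow_le_pow_right (Nat.le_succ_of_le (Finset.le_sup hzmem)) hmem)
  choose M hM using hMex
  -- the finite set of "bad" primes
  set S : Set (PrimeIdeal K) :=
    {p | ∃ x ∈ Set.range ξ, ∃ y ∈ Set.range ξ, x ≠ y ∧ x - y ∈ p.1} with hSdef
  have hSfin : S.Finite := by
    have hsub : S ⊆ ⋃ z ∈ ((Set.range ξ) ×ˢ (Set.range ξ)) ∩ {z : 𝓞 K × 𝓞 K | z.1 ≠ z.2},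
        {p : PrimeIdeal K | z.1 - z.2 ∈ p.1} := by
      rintro p ⟨x, hx, y, hy, hne, hmem⟩
      refine Set.mem_biUnion (x := ((x, y) : 𝓞 K × 𝓞 K)) ⟨⟨hx, hy⟩, hne⟩ hmem
    refine Set.Finite.subset (Set.Finite.biUnion ((hC.prod hC).inter_of_left _) ?_) hsub
    rintro ⟨x, y⟩ ⟨⟨hx, hy⟩, hne⟩
    have hd : x - y ≠ 0 := sub_ne_zero.mpr hne
    have hspanne : Ideal.span {x - y} ≠ (0 : Ideal (𝓞 K)) := by
      rw [Ideal.zero_eq_bot, Ne, Ideal.span_singleton_eq_bot]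
      exact hd
    have hff := Ideal.finite_factors hspanne
    have himg : {p : PrimeIdeal K | x - y ∈ p.1} ⊆
        (fun v : IsDedekindDomain.HeightOneSpectrum (𝓞 K) =>
          (⟨v.asIdeal, v.isPrime, v.ne_bot⟩ : PrimeIdeal K)) ''
          {v | v.asIdeal ∣ Ideal.span {x - y}} := by
      rintro p hp
      exact ⟨⟨p.1, p.2.1, p.2.2⟩, Ideal.dvd_span_singleton.mpr hp, rfl⟩
    exact Set.Finite.subset (hff.image _) himg
  haveI hSfint : Fintype ↥S := hSfin.fintype
  set t : (↥S → ℕ) → IK K := fun e => ∏ P : ↥S, (P.1.toIK) ^ (e P) with htdef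
  -- good primes act trivially
  have hgood : ∀ p : PrimeIdeal K, p ∉ S → ∀ b : IK K,
      shift (p.toIK * b) ξ = shift b ξ := by
    intro p hp b
    funext c
    show ξ (p.toIK * b * c) = ξ (b * c)
    rw [mul_assoc]
    by_contra hne
    exact hp ⟨ξ (p.toIK * (b * c)), ⟨_, rfl⟩, ξ (b * c), ⟨_, rfl⟩, hne,
      aux_Witt_cong1 hξ p (b * c)⟩
  -- main claim, by induction on a prime factorization
  have claim : ∀ ms : Multiset (Ideal (𝓞 K)), (∀ r ∈ ms, Prime r) → ∀ a : IK K,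
      (a : Ideal (𝓞 K)) = ms.prod →
      ∃ e : ↥S → ℕ, (∀ P : ↥S, e P ≤ M P.1) ∧ shift a ξ = shift (t e) ξ := by
    intro ms
    induction ms using Multiset.induction_on with
    | empty =>
      intro _ a ha
      refine ⟨fun _ => 0, fun _ => Nat.zero_le _, ?_⟩
      have ha1 : a = 1 := Subtype.ext (by simpa using ha)
      have ht1 : t (fun _ => 0) = 1 := by simp [htdef]
      rw [ha1, ht1]
    | cons q ms ih =>
      intro hprime a ha
      have hq : Prime q := hprime q (Multiset.mem_cons_self q ms)
      have hms : ∀ r ∈ ms, Prime r := fun r hr => hprime r (Multiset.mem_cons_of_mem hr)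
      have hane : (a : Ideal (𝓞 K)) ≠ 0 := by
        rw [Ideal.zero_eq_bot]; exact a.2
      have hmsne : ms.prod ≠ (0 : Ideal (𝓞 K)) := by
        intro h0
        rw [ha, Multiset.prod_cons, h0, mul_zero] at hane
        exact hane rfl
      set b : IK K := ⟨ms.prod, mem_IdealMonoid_iff.mpr
        (by rw [← Ideal.zero_eq_bot]; exact hmsne)⟩ with hbdef
      set P : PrimeIdeal K := ⟨q, Ideal.isPrime_of_prime hq,
        by rw [← Ideal.zero_eq_bot]; exact hq.ne_zero⟩ with hPdef
      obtain ⟨e, hebd, heq⟩ := ih hms b rfl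
      have ha2 : a = P.toIK * b := by
        apply Subtype.ext
        rw [ha, Multiset.prod_cons]
        rfl
      have hshift1 : shift a ξ = shift (P.toIK * t e) ξ := by
        funext c
        show ξ (a * c) = ξ (P.toIK * t e * c)
        rw [ha2]
        have h1 : P.toIK * b * c = b * (P.toIK * c) := by
          rw [mul_comm P.toIK b, mul_assoc]
        have h2 : P.toIK * t e * c = t e * (P.toIK * c) := by
          rw [mul_comm P.toIK (t e), mul_assoc]
        rw [h1, h2]
        exact congrFun heq (P.toIK * c)
      by_cases hPS : P ∈ S
      · set Ps : (↥S) := ⟨P, hPS⟩ with hPsdef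
        have hsplit : t e = P.toIK ^ (e Ps) *
            ∏ Q ∈ Finset.univ.erase Ps, (Q.1.toIK) ^ (e Q) := by
          simp only [htdef]
          exact (Finset.mul_prod_erase Finset.univ _ (Finset.mem_univ Ps)).symm
        by_cases hlt : e Ps < M P
        · refine ⟨Function.update e Ps (e Ps + 1), ?_, ?_⟩
          · intro Q
            by_cases hQ : Q = Ps
            · subst hQ
              simp only [Function.update_self]
              exact hlt
            · rw [Function.update_of_ne hQ]; exact hebd Q
          · have htt : t (Function.update e Ps (e Ps + 1)) = P.toIK * t e := by
              have h1 : t (Function.update e Ps (e Ps + 1))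
                  = P.toIK ^ (e Ps + 1) *
                    ∏ Q ∈ Finset.univ.erase Ps, (Q.1.toIK) ^ (e Q) := by
                simp only [htdef]
                rw [← Finset.mul_prod_erase Finset.univ _ (Finset.mem_univ Ps)]
                congr 1
                · rw [Function.update_self]
                · exact Finset.prod_congr rfl fun Q hQ => by
                    rw [Function.update_of_ne (Finset.ne_of_mem_erase hQ)]
              rw [h1, hsplit, pow_succ', mul_assoc]
            rw [hshift1, htt]
        · have heP : e Ps = M P := le_antisymm (hebd Ps) (not_lt.mp hlt)
          refine ⟨e, hebd, ?_⟩
          rw [hshift1]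
          funext c
          show ξ (P.toIK * t e * c) = ξ (t e * c)
          have hidx1 : P.toIK * t e * c = P.toIK ^ (M P + 1) *
              ((∏ Q ∈ Finset.univ.erase Ps, (Q.1.toIK) ^ (e Q)) * c) := by
            rw [hsplit, heP, ← mul_assoc, ← mul_assoc, ← pow_succ', mul_assoc]
          have hidx2 : t e * c = P.toIK ^ (M P) *
              ((∏ Q ∈ Finset.univ.erase Ps, (Q.1.toIK) ^ (e Q)) * c) := by
            rw [hsplit, heP, mul_assoc]
          rw [hidx1, hidx2]
          exact hM P _ ⟨_, rfl⟩ _ ⟨_, rfl⟩ (aux_Witt_cong hξ P (M P) _)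
      · exact ⟨e, hebd, by rw [hshift1]; exact hgood P hPS (t e)⟩
  -- conclude
  have hcover : (Set.range fun a : IK K => shift a ξ) ⊆
      Set.range (fun v : (∀ P : ↥S, Fin (M P.1 + 1)) =>
        shift (t fun P => (v P : ℕ)) ξ) := by
    rintro x ⟨a, rfl⟩
    have hane : (a : Ideal (𝓞 K)) ≠ 0 := by rw [Ideal.zero_eq_bot]; exact a.2
    obtain ⟨ms, hmsp, hassoc⟩ :=
      UniqueFactorizationMonoid.exists_prime_factors (a : Ideal (𝓞 K)) hane
    obtain ⟨e, hebd, heq⟩ := claim ms hmsp a (associated_iff_eq.mp hassoc).symm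
    exact ⟨fun P => ⟨e P, Nat.lt_succ_of_le (hebd P)⟩, heq.symm⟩
  exact Set.Finite.subset (Set.finite_range _) hcover


end
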